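/- arXiv:2406.09593 — 3 statements merged into one kernel-verified Lean document; each statement's English description precedes it below -/
import Mathlib

section
/- Let Λ be the submonoid of ℚ_{≥0} generated by {1/p : p a prime number}. Then: (a) Λ does not have bounded factorization (indeed, 1 ∈ Λ can be written as the sum of p copies of the nonzero element 1/p for every prime p); but (b) Λ is well-founded, i.e. the strict divisibility relation g <_Λ h (meaning there exists nonzero q ∈ Λ with g + q = h) admits no infinite strictly descending chains; equivalently, <_Λ is a well-founded relation on Λ. -/
/-- `Λ` has bounded factorization. -/
def HasBoundedFactorization (Λ : Type*) [AddCommMonoid Λ] : Prop :=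
  ∀ g : Λ, ∃ N : ℕ, ∀ (s : ℕ) (f : Fin s → Λ),
    (∀ i, f i ≠ 0) → (∑ i, f i) = g → s ≤ N

/-- The submonoid of `ℚ_{≥0}` generated by the reciprocals of the primes. -/
def primeRecipMonoid : AddSubmonoid ℚ :=
  AddSubmonoid.closure {q : ℚ | ∃ p : ℕ, p.Prime ∧ q = 1 / p}

def IsRep (c : ℕ →₀ ℕ) (x : ℚ) : Prop :=
  (∀ p ∈ c.support, p.Prime) ∧ x = ∑ p ∈ c.support, (c p : ℚ) / p

lemma sum_ext {M : Type*} [AddCommMonoid M] (c : ℕ →₀ ℕ) {s : Finset ℕ}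
    (hs : c.support ⊆ s) (f : ℕ → ℕ → M) (hf : ∀ p, f p 0 = 0) :
    ∑ p ∈ c.support, f p (c p) = ∑ p ∈ s, f p (c p) :=
  Finset.sum_subset hs (fun p _ hp => by
    rw [Finsupp.notMem_support_iff.mp hp, hf])

lemma exists_rep {x : ℚ} (hx : x ∈ primeRecipMonoid) : ∃ c, IsRep c x := by
  induction hx using AddSubmonoid.closure_induction with
  | mem q hq =>
    obtain ⟨p, hp, rfl⟩ := hq
    refine ⟨Finsupp.single p 1, ?_, ?_⟩
    · intro r hr
      rw [Finsupp.support_single_ne_zero _ one_ne_zero] at hr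
      simp only [Finset.mem_singleton] at hr
      exact hr ▸ hp
    · rw [Finsupp.support_single_ne_zero _ one_ne_zero]
      simp
  | zero => exact ⟨0, by simp, by simp⟩
  | add a b ha hb iha ihb =>
    classical
    obtain ⟨c₁, hc₁p, hc₁v⟩ := iha
    obtain ⟨c₂, hc₂p, hc₂v⟩ := ihb
    refine ⟨c₁ + c₂, ?_, ?_⟩
    · intro p hp
      rcases Finset.mem_union.mp (Finsupp.support_add hp) with h | h
      exacts [hc₁p p h, hc₂p p h]
    · rw [sum_ext (c₁ + c₂) (Finsupp.support_add)
        (fun p a => (a : ℚ)/p) (by simp)]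
      simp only [Finsupp.add_apply, Nat.cast_add, add_div, Finset.sum_add_distrib]
      rw [hc₁v, hc₂v,
        sum_ext c₁ Finset.subset_union_left (fun p a => (a : ℚ)/p) (by simp),
        sum_ext c₂ Finset.subset_union_right (fun p a => (a : ℚ)/p) (by simp)]

lemma digit_welldef {x : ℚ} {c₁ c₂ : ℕ →₀ ℕ} (h₁ : IsRep c₁ x) (h₂ : IsRep c₂ x)
    (p : ℕ) : c₁ p % p = c₂ p % p := by
  classical
  by_cases hp : p ∈ c₁.support ∪ c₂.support
  swap
  · rw [Finset.mem_union, not_or, Finsupp.notMem_support_iff,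
      Finsupp.notMem_support_iff] at hp
    rw [hp.1, hp.2]
  set s := c₁.support ∪ c₂.support with hs
  have hsp : ∀ q ∈ s, Nat.Prime q := by
    intro q hq
    rcases Finset.mem_union.mp hq with h | h
    exacts [h₁.1 q h, h₂.1 q h]
  have hpp : p.Prime := hsp p hp
  set P := ∏ q ∈ s, q with hP
  have key : ∀ c : ℕ →₀ ℕ, c.support ⊆ s → x = ∑ q ∈ c.support, (c q : ℚ)/q →
      ((∑ q ∈ s, c q * (P / q) : ℕ) : ℚ) = x * P := by
    intro c hc hval
    rw [hval, sum_ext c hc (fun q a => (a : ℚ)/q) (by simp), Finset.sum_mul]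
    push_cast
    refine Finset.sum_congr rfl fun q hq => ?_
    have hq' := hsp q hq
    have hdvd : q ∣ P := Finset.dvd_prod_of_mem id hq
    have hq0 : (q : ℚ) ≠ 0 := Nat.cast_ne_zero.mpr hq'.ne_zero
    rw [Nat.cast_div hdvd hq0]
    field_simp
  have hNat : (∑ q ∈ s, c₁ q * (P / q)) = ∑ q ∈ s, c₂ q * (P / q) := by
    have e1 := key c₁ Finset.subset_union_left h₁.2
    have e2 := key c₂ Finset.subset_union_right h₂.2
    exact_mod_cast e1.trans e2.symm
  -- cast to ZMod p
  haveI := Fact.mk hpp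
  have hz : ((∑ q ∈ s, c₁ q * (P / q) : ℕ) : ZMod p)
      = ((∑ q ∈ s, c₂ q * (P / q) : ℕ) : ZMod p) := by rw [hNat]
  push_cast at hz
  have hvanish : ∀ q ∈ s, q ≠ p → ((P / q : ℕ) : ZMod p) = 0 := by
    intro q hq hqp
    rw [ZMod.natCast_eq_zero_iff]
    have : P / q = ∏ t ∈ s.erase q, t := by
      rw [hP, ← Finset.mul_prod_erase s (fun t => t) hq]
      exact Nat.mul_div_cancel_left _ (hsp q hq).pos
    rw [this]
    exact Finset.dvd_prod_of_mem (fun t => t) (Finset.mem_erase.mpr ⟨Ne.symm hqp, hp⟩)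
  have hcol : ∀ c : ℕ →₀ ℕ, (∑ q ∈ s, ((c q : ZMod p) * ((P / q : ℕ) : ZMod p)))
      = (c p : ZMod p) * ((P / p : ℕ) : ZMod p) := fun c =>
    Finset.sum_eq_single_of_mem p hp (fun q hq hqp => by rw [hvanish q hq hqp, mul_zero])
  rw [hcol c₁, hcol c₂] at hz
  have hPp : ((P / p : ℕ) : ZMod p) ≠ 0 := by
    rw [Ne, ZMod.natCast_eq_zero_iff]
    have hdecomp : P / p = ∏ t ∈ s.erase p, t := by
      rw [hP, ← Finset.mul_prod_erase s (fun t => t) hp]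
      exact Nat.mul_div_cancel_left _ hpp.pos
    rw [hdecomp]
    intro hdvd
    obtain ⟨t, ht, hpt⟩ := (hpp.prime.dvd_finset_prod_iff _).mp hdvd
    have := (Nat.prime_dvd_prime_iff_eq hpp (hsp t (Finset.mem_of_mem_erase ht))).mp hpt
    exact (Finset.mem_erase.mp ht).1 this.symm
  have hc := mul_right_cancel₀ hPp hz
  exact (ZMod.natCast_eq_natCast_iff _ _ _).mp hc

def NOf (c : ℕ →₀ ℕ) : ℕ := ∑ p ∈ c.support, c p / p
def DOf (c : ℕ →₀ ℕ) : ℕ := ∑ p ∈ c.support, c p % p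

lemma rep_decomp {x : ℚ} {c : ℕ →₀ ℕ} (h : IsRep c x) :
    x = (NOf c : ℚ) + ∑ q ∈ c.support, ((c q % q : ℕ) : ℚ)/q := by
  rw [h.2, NOf]
  push_cast
  rw [← Finset.sum_add_distrib]
  refine Finset.sum_congr rfl fun q hq => ?_
  have hq' := h.1 q hq
  have hq0 : (q : ℚ) ≠ 0 := Nat.cast_ne_zero.mpr hq'.ne_zero
  have hd : (q : ℚ) * ((c q / q : ℕ) : ℚ) + ((c q % q : ℕ) : ℚ) = (c q : ℚ) := by
    exact_mod_cast Nat.div_add_mod (c q) q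
  rw [← hd, add_div, mul_div_cancel_left₀ _ hq0]

lemma NOf_welldef {x : ℚ} {c₁ c₂ : ℕ →₀ ℕ} (h₁ : IsRep c₁ x) (h₂ : IsRep c₂ x) :
    NOf c₁ = NOf c₂ := by
  classical
  have d1 := rep_decomp h₁
  have d2 := rep_decomp h₂
  rw [sum_ext c₁ (Finset.subset_union_left (s₂ := c₂.support))
      (fun q a => ((a % q : ℕ) : ℚ)/q) (by simp)] at d1
  rw [sum_ext c₂ (Finset.subset_union_right (s₁ := c₁.support))
      (fun q a => ((a % q : ℕ) : ℚ)/q) (by simp)] at d2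
  have hdig : ∑ q ∈ c₁.support ∪ c₂.support, ((c₁ q % q : ℕ) : ℚ)/q
      = ∑ q ∈ c₁.support ∪ c₂.support, ((c₂ q % q : ℕ) : ℚ)/q :=
    Finset.sum_congr rfl fun q _ => by rw [digit_welldef h₁ h₂ q]
  have : (NOf c₁ : ℚ) = NOf c₂ := by
    have := d1.symm.trans d2
    rw [hdig] at this
    exact add_right_cancel this
  exact_mod_cast this

lemma DOf_welldef {x : ℚ} {c₁ c₂ : ℕ →₀ ℕ} (h₁ : IsRep c₁ x) (h₂ : IsRep c₂ x) :
    DOf c₁ = DOf c₂ := by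
  classical
  rw [DOf, DOf,
    sum_ext c₁ (Finset.subset_union_left (s₂ := c₂.support)) (fun q a => a % q) (by simp),
    sum_ext c₂ (Finset.subset_union_right (s₁ := c₁.support)) (fun q a => a % q) (by simp)]
  exact Finset.sum_congr rfl fun q _ => digit_welldef h₁ h₂ q

lemma descent {h q : ℚ} {ch cq cg : ℕ →₀ ℕ} (hh : IsRep ch h) (hq : IsRep cq q)
    (hq0 : q ≠ 0) (hg : IsRep cg (h + q)) :
    Prod.Lex (· < ·) (· < ·) (NOf ch, DOf ch) (NOf cg, DOf cg) := by
  classical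
  set u := ch.support ∪ cq.support with hu
  have hrep : IsRep (ch + cq) (h + q) := by
    constructor
    · intro p hp
      rcases Finset.mem_union.mp (Finsupp.support_add hp) with h' | h'
      exacts [hh.1 p h', hq.1 p h']
    · rw [sum_ext (ch + cq) Finsupp.support_add (fun p a => (a : ℚ)/p) (by simp)]
      simp only [Finsupp.add_apply, Nat.cast_add, add_div, Finset.sum_add_distrib]
      rw [← hu, hh.2, hq.2,
        sum_ext ch Finset.subset_union_left (fun p a => (a : ℚ)/p) (by simp),
        sum_ext cq Finset.subset_union_right (fun p a => (a : ℚ)/p) (by simp)]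
  have hNg : NOf cg = NOf (ch + cq) := NOf_welldef hg hrep
  have hDg : DOf cg = DOf (ch + cq) := DOf_welldef hg hrep
  have hsupp : (ch + cq).support ⊆ u := Finsupp.support_add
  have hN : NOf (ch + cq) = ∑ p ∈ u, (ch p + cq p) / p := by
    rw [NOf, sum_ext (ch + cq) hsupp (fun p a => a / p) (by simp)]
    exact Finset.sum_congr rfl fun p _ => by rw [Finsupp.add_apply]
  have hD : DOf (ch + cq) = ∑ p ∈ u, (ch p + cq p) % p := by
    rw [DOf, sum_ext (ch + cq) hsupp (fun p a => a % p) (by simp)]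
    exact Finset.sum_congr rfl fun p _ => by rw [Finsupp.add_apply]
  have hNh : NOf ch = ∑ p ∈ u, ch p / p :=
    sum_ext ch Finset.subset_union_left (fun p a => a / p) (by simp)
  have hNq : NOf cq = ∑ p ∈ u, cq p / p :=
    sum_ext cq Finset.subset_union_right (fun p a => a / p) (by simp)
  have hDh : DOf ch = ∑ p ∈ u, ch p % p :=
    sum_ext ch Finset.subset_union_left (fun p a => a % p) (by simp)
  have hDq : DOf cq = ∑ p ∈ u, cq p % p :=
    sum_ext cq Finset.subset_union_right (fun p a => a % p) (by simp)
  have hterm : ∀ p ∈ u, ch p / p + cq p / p ≤ (ch p + cq p) / p :=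
    fun p _ => Nat.add_div_le_add_div _ _ _
  have hle : NOf ch + NOf cq ≤ NOf (ch + cq) := by
    rw [hNh, hNq, hN, ← Finset.sum_add_distrib]
    exact Finset.sum_le_sum hterm
  rcases lt_or_eq_of_le (le_trans (Nat.le_add_right (NOf ch) (NOf cq)) hle) with hlt | heq
  · exact Prod.Lex.left _ _ (hNg ▸ hlt)
  · -- equality of integer parts
    have hNcq : NOf cq = 0 := by omega
    have hsum_eq : ∑ p ∈ u, (ch p / p + cq p / p) = ∑ p ∈ u, (ch p + cq p) / p := by
      rw [Finset.sum_add_distrib, ← hNh, ← hNq, ← hN]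
      omega
    have hterm_eq := (Finset.sum_eq_sum_iff_of_le hterm).mp hsum_eq
    have hmod : ∀ p ∈ u, (ch p + cq p) % p = ch p % p + cq p % p := by
      intro p hp
      have h1 := Nat.div_add_mod (ch p) p
      have h2 := Nat.div_add_mod (cq p) p
      have h3 := Nat.div_add_mod (ch p + cq p) p
      rw [← hterm_eq p hp, Nat.mul_add] at h3
      omega
    have hDsum : DOf (ch + cq) = DOf ch + DOf cq := by
      rw [hD, hDh, hDq, ← Finset.sum_add_distrib]
      exact Finset.sum_congr rfl hmod
    have hDcq : 0 < DOf cq := by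
      rcases Nat.eq_zero_or_pos (DOf cq) |>.symm with hp | h0
      · exact hp
      · exfalso
        apply hq0
        have hcq0 : cq = 0 := by
          ext p
          by_cases hps : p ∈ cq.support
          · have hdiv : cq p / p = 0 :=
              (Finset.sum_eq_zero_iff (s := u) (f := fun r => cq r / r)).mp (hNq ▸ hNcq) p
                (Finset.subset_union_right hps)
            have hmod0 : cq p % p = 0 :=
              (Finset.sum_eq_zero_iff (s := u) (f := fun r => cq r % r)).mp (hDq ▸ h0) p
                (Finset.subset_union_right hps)
            have hdm := Nat.div_add_mod (cq p) p
            rw [hdiv, hmod0, Nat.mul_zero, Nat.add_zero] at hdm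
            simp only [Finsupp.coe_zero, Pi.zero_apply]
            exact hdm.symm
          · simpa using Finsupp.notMem_support_iff.mp hps
        rw [hq.2, hcq0]
        simp
    refine ?_
    have hNfin : NOf cg = NOf ch := by omega
    have hDfin : DOf ch < DOf cg := by omega
    rw [hNfin]
    exact Prod.Lex.right _ hDfin

/-- **Example 2.2**: the submonoid `Λ ⊆ ℚ_{≥0}` generated by `{1/p : p prime}` does not have
bounded factorization — indeed `1 ∈ Λ` is the sum of `p` copies of the nonzero element
`1/p ∈ Λ` for every prime `p` — but the strict divisibility relation on `Λ` is
well-founded. -/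
theorem primeRecipMonoid_wellFounded_not_boundedFactorization :
    ((1 : ℚ) ∈ primeRecipMonoid ∧
      ∀ p : ℕ, p.Prime → (1 / p : ℚ) ∈ primeRecipMonoid ∧ (1 / p : ℚ) ≠ 0 ∧
        p • (1 / p : ℚ) = 1) ∧
    ¬ HasBoundedFactorization primeRecipMonoid ∧
    WellFounded (fun g h : primeRecipMonoid => (∃ q : primeRecipMonoid, g + q = h) ∧ g ≠ h) := by
  have hgen : ∀ p : ℕ, p.Prime → (1 / p : ℚ) ∈ primeRecipMonoid := fun p hp =>
    AddSubmonoid.subset_closure ⟨p, hp, rfl⟩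
  have h1 : (1 : ℚ) ∈ primeRecipMonoid := by
    have h2 := hgen 2 Nat.prime_two
    have hsum := AddSubmonoid.add_mem _ h2 h2
    norm_num at hsum
    exact hsum
  have hp0 : ∀ p : ℕ, p.Prime → (1 / p : ℚ) ≠ 0 := fun p hp =>
    one_div_ne_zero (Nat.cast_ne_zero.mpr hp.ne_zero)
  refine ⟨⟨h1, fun p hp => ⟨hgen p hp, hp0 p hp, ?_⟩⟩, ?_, ?_⟩
  · rw [nsmul_eq_mul]
    field_simp
    exact div_self (Nat.cast_ne_zero.mpr hp.ne_zero)
  · -- not bounded factorization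
    intro hbf
    obtain ⟨N, hN⟩ := hbf ⟨1, h1⟩
    obtain ⟨p, hpN, hp⟩ := Nat.exists_infinite_primes (N + 1)
    have hmem := hgen p hp
    have hle := hN p (fun _ => ⟨1/p, hmem⟩)
      (fun i h => hp0 p hp (congrArg Subtype.val h))
      (by
        apply Subtype.ext
        push_cast [AddSubmonoidClass.coe_finset_sum]
        rw [Finset.sum_const, Finset.card_univ, Fintype.card_fin, nsmul_eq_mul]
        field_simp
        exact div_self (Nat.cast_ne_zero.mpr hp.ne_zero))
    omega
  · -- well-foundedness
    have wf0 : WellFounded (Prod.Lex ((· < ·) : ℕ → ℕ → Prop) ((· < ·) : ℕ → ℕ → Prop)) :=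
      WellFounded.prod_lex Nat.lt_wfRel.wf Nat.lt_wfRel.wf
    refine Subrelation.wf (r := InvImage (Prod.Lex (· < ·) (· < ·)) fun g : primeRecipMonoid =>
        (NOf (exists_rep g.2).choose, DOf (exists_rep g.2).choose)) ?_
      (InvImage.wf _ wf0)
    rintro g h ⟨⟨q, hq⟩, hne⟩
    have hcg := (exists_rep g.2).choose_spec
    have hch := (exists_rep h.2).choose_spec
    obtain ⟨cq, hcq⟩ := exists_rep q.2
    have hqne : (q : ℚ) ≠ 0 := by
      intro h0
      apply hne
      have hq0 : q = 0 := Subtype.ext h0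
      rw [hq0, add_zero] at hq
      exact hq
    have hval : (h : ℚ) = (g : ℚ) + (q : ℚ) := by
      rw [← hq]; rfl
    have hrep_h : IsRep (exists_rep h.2).choose ((g : ℚ) + (q : ℚ)) := hval ▸ hch
    exact descent hcg hcq hqne hrep_h
end

section
/- Let p_n denote the n-th prime number, and let Λ be the submonoid of ℚ_{≥0} generated by {1} ∪ {n + 1/p_n : n ∈ ℕ, n ≥ 1}. Then Λ is pointed and has bounded factorization. (The key observation: for every q ∈ ℚ, the set {n ≥ 1 : n + 1/p_n ≤ q} is finite.) -/
/-- The `n`-th prime number (so `nthPrime 1 = 2`). -/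
noncomputable def nthPrime (n : ℕ) : ℕ := Nat.nth Nat.Prime (n - 1)

/-- The submonoid of `ℚ_{≥0}` generated by `1` and `n + 1/pₙ` for `n ≥ 1`, where `pₙ`
is the `n`-th prime. -/
noncomputable def exoticMonoid : AddSubmonoid ℚ :=
  AddSubmonoid.closure ({1} ∪ {q : ℚ | ∃ n : ℕ, 1 ≤ n ∧ q = n + 1 / (nthPrime n : ℚ)})

lemma exoticMonoid_zero_or_one_le (q : ℚ) (hq : q ∈ exoticMonoid) : q = 0 ∨ 1 ≤ q := by
  induction hq using AddSubmonoid.closure_induction with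
  | mem x hx =>
    right
    rcases hx with hx | ⟨n, hn, rfl⟩
    · simp_all
    · have hp : (0:ℚ) < (nthPrime n : ℚ) := by
        have : (nthPrime n).Prime := Nat.prime_nth_prime (n - 1)
        exact_mod_cast this.pos
      have h1 : (1:ℚ) ≤ (n:ℚ) := by exact_mod_cast hn
      have h2 : (0:ℚ) ≤ 1 / (nthPrime n : ℚ) := by positivity
      linarith
  | zero => left; rfl
  | add x y _ _ hx hy =>
    rcases hx with rfl | hx
    · simpa using hy
    · rcases hy with rfl | hy
      · right; simpa using hx
      · right; linarith

lemma exoticMonoid_nonneg (q : ℚ) (hq : q ∈ exoticMonoid) : 0 ≤ q := by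
  rcases exoticMonoid_zero_or_one_le q hq with rfl | h
  · exact le_refl _
  · linarith

/-- **Example 4.2**: the submonoid of `ℚ_{≥0}` generated by `1` and `n + 1/pₙ` (for `n ≥ 1`)
is pointed and has bounded factorization. -/
theorem exoticMonoid_pointed_boundedFactorization :
    (∀ q q' : exoticMonoid, q + q' = 0 → q = 0 ∧ q' = 0) ∧
    HasBoundedFactorization exoticMonoid := by
  constructor
  · rintro ⟨q, hq⟩ ⟨q', hq'⟩ h
    have h0 : q + q' = 0 := Subtype.ext_iff.mp h
    have h1 := exoticMonoid_nonneg q hq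
    have h2 := exoticMonoid_nonneg q' hq'
    constructor <;> · ext; simp; linarith
  · intro g
    refine ⟨⌈(g : ℚ)⌉₊, fun s f hf hsum => ?_⟩
    have hle : ∀ i : Fin s, (1:ℚ) ≤ (f i : ℚ) := by
      intro i
      rcases exoticMonoid_zero_or_one_le (f i) (f i).2 with h | h
      · exact absurd (by ext; exact h) (hf i)
      · exact h
    have hsum' : (s : ℚ) ≤ (g : ℚ) := by
      have : ((∑ i, f i : exoticMonoid) : ℚ) = ∑ i : Fin s, ((f i : ℚ)) :=
        AddSubmonoid.coe_finset_sum _ f Finset.univ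
      calc (s : ℚ) = ∑ _i : Fin s, (1:ℚ) := by simp
        _ ≤ ∑ i : Fin s, ((f i : ℚ)) := Finset.sum_le_sum fun i _ => hle i
        _ = (g : ℚ) := by rw [← this, hsum]
    have := hsum'.trans (Nat.le_ceil (g : ℚ))
    exact_mod_cast this
end

section
/- Let p_n denote the n-th prime number, and let Λ be the submonoid of ℚ_{≥0} generated by {1} ∪ {n + 1/p_n : n ∈ ℕ, n ≥ 1}. Then there is no 'flattening' map for Λ: there exists no additive monoid homomorphism φ : Λ → ℤ such that φ(g) > 0 for every nonzero g ∈ Λ. (Any such φ would satisfy p_n · φ(n + 1/p_n) = (n·p_n + 1) · φ(1) for all n, forcing p_n to divide φ(1) for every n, hence φ(1) = 0, a contradiction.) -/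
lemma one_mem_exoticMonoid : (1 : ℚ) ∈ exoticMonoid :=
  AddSubmonoid.subset_closure (Or.inl rfl)

lemma gen_mem_exoticMonoid (n : ℕ) (hn : 1 ≤ n) :
    ((n : ℚ) + 1 / (nthPrime n : ℚ)) ∈ exoticMonoid :=
  AddSubmonoid.subset_closure (Or.inr ⟨n, hn, rfl⟩)

/-- **Example 4.2**: there is no flattening map for the submonoid of `ℚ_{≥0}` generated by `1`
and `n + 1/pₙ` (`n ≥ 1`): no additive monoid homomorphism `φ : Λ → ℤ` is positive on all
nonzero elements of `Λ`. -/
theorem exoticMonoid_no_flattening :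
    ¬ ∃ φ : exoticMonoid →+ ℤ, ∀ g : exoticMonoid, g ≠ 0 → 0 < φ g := by
  rintro ⟨φ, hφ⟩
  set one : exoticMonoid := ⟨1, one_mem_exoticMonoid⟩ with hone
  set a : ℤ := φ one with ha
  have hone_ne : one ≠ 0 := by
    intro h
    have : (1 : ℚ) = 0 := congrArg Subtype.val h
    norm_num at this
  have hapos : 0 < a := hφ one hone_ne
  -- every prime divides a
  have key : ∀ p : ℕ, p.Prime → (p : ℤ) ∣ a := by
    intro p hp
    set n : ℕ := Nat.count Nat.Prime p + 1 with hn
    have hnth : nthPrime n = p := by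
      simp [nthPrime, hn, Nat.nth_count hp]
    have hn1 : 1 ≤ n := Nat.le_add_left 1 _
    set g : exoticMonoid := ⟨(n : ℚ) + 1 / (nthPrime n : ℚ), gen_mem_exoticMonoid n hn1⟩
    have hrel : p • g = (n * p + 1) • one := by
      apply Subtype.ext
      have : ((p • g : exoticMonoid) : ℚ) = p • ((n : ℚ) + 1 / (nthPrime n : ℚ)) := by
        simp [g]
      rw [this]
      have h2 : (((n * p + 1) • one : exoticMonoid) : ℚ) = (n * p + 1 : ℕ) • (1 : ℚ) := by
        simp [one]
      rw [h2, hnth]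
      have hp0 : (p : ℚ) ≠ 0 := by exact_mod_cast hp.pos.ne'
      field_simp
      rw [nsmul_eq_mul, nsmul_eq_mul]
      push_cast
      field_simp
    have hφrel : (p : ℤ) * φ g = ((n : ℤ) * p + 1) * a := by
      have := congrArg φ hrel
      rw [map_nsmul, map_nsmul] at this
      push_cast [nsmul_eq_mul, hn] at this ⊢
      linarith [this]
    have hdvd : (p : ℤ) ∣ ((n : ℤ) * p + 1) * a := ⟨φ g, hφrel.symm⟩
    have : (p : ℤ) ∣ a := by
      have h2 : (p : ℤ) ∣ (n : ℤ) * p * a := ⟨(n : ℤ) * a, by ring⟩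
      have := dvd_sub hdvd h2
      simpa [mul_comm, sub_eq_iff_eq_add, add_mul, one_mul] using this
    exact this
  -- choose a prime larger than a
  obtain ⟨p, hpa, hp⟩ := Nat.exists_infinite_primes (a.natAbs + 1)
  have hdvd := key p hp
  have : a = 0 := by
    refine Int.eq_zero_of_abs_lt_dvd hdvd ?_
    rw [Int.abs_eq_natAbs]
    exact_mod_cast Nat.lt_of_lt_of_le (Nat.lt_succ_self _) hpa
  omega
end
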